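/- arXiv:1607.08228 — 2 statements merged into one kernel-verified Lean document; each statement's English description precedes it below -/
import Mathlib

section
/- Composition of point-wise privacy bounds: let μ be a sub-distribution on a countable set S, f : S → dist(S), and Γ : S → S an injection. Suppose μ(m') ≤ exp(ε₁)·μ'(Γ(m')) for all m' ∈ S (where μ' is another sub-distribution on S), and for every m' ∈ S and m ∈ S, f(m')(m) ≤ exp(ε₂)·f(Γ(m'))(Γ(m)). Then for every m ∈ S, (bind μ f)(m) ≤ exp(ε₁ + ε₂) · (bind μ' f)(Γ(m)). -/
/-- Composition of point-wise privacy bounds through bind. -/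
theorem bind_pointwise_compose {S : Type*} [Countable S]
    (μ μ' : S → ℝ) (f : S → S → ℝ) (Γ : S → S) (ε₁ ε₂ : ℝ)
    (hΓ : Function.Injective Γ)
    (hμ0 : ∀ m, 0 ≤ μ m) (hμ'0 : ∀ m, 0 ≤ μ' m)
    (hf0 : ∀ m' m, 0 ≤ f m' m)
    (hs : ∀ m, Summable (fun m' => f m' m * μ m'))
    (hs' : ∀ m, Summable (fun m' => f m' m * μ' m'))
    (hμ : ∀ m', μ m' ≤ Real.exp ε₁ * μ' (Γ m'))
    (hf : ∀ m' m, f m' m ≤ Real.exp ε₂ * f (Γ m') (Γ m)) :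
    ∀ m, (∑' m', f m' m * μ m') ≤
      Real.exp (ε₁ + ε₂) * ∑' m', f m' (Γ m) * μ' m' := by
  intro m
  have hsum' : Summable (fun m' => f (Γ m') (Γ m) * μ' (Γ m')) :=
    (hs' (Γ m)).comp_injective hΓ
  have step1 : (∑' m', f m' m * μ m') ≤
      ∑' m', Real.exp (ε₁ + ε₂) * (f (Γ m') (Γ m) * μ' (Γ m')) := by
    apply Summable.tsum_le_tsum _ (hs m) (hsum'.mul_left _)
    intro m'
    calc f m' m * μ m' ≤ (Real.exp ε₂ * f (Γ m') (Γ m)) * (Real.exp ε₁ * μ' (Γ m')) :=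
          mul_le_mul (hf m' m) (hμ m') (hμ0 m')
            (mul_nonneg (Real.exp_pos _).le (hf0 _ _))
      _ = Real.exp (ε₁ + ε₂) * (f (Γ m') (Γ m) * μ' (Γ m')) := by
          rw [Real.exp_add]; ring
  have step2 : (∑' m', f (Γ m') (Γ m) * μ' (Γ m')) ≤ ∑' m', f m' (Γ m) * μ' m' :=
    Summable.tsum_le_tsum_of_inj Γ hΓ (fun c _ => mul_nonneg (hf0 _ _) (hμ'0 _))
      (fun _ => le_rfl) hsum' (hs' (Γ m))
  calc (∑' m', f m' m * μ m')
      ≤ ∑' m', Real.exp (ε₁ + ε₂) * (f (Γ m') (Γ m) * μ' (Γ m')) := step1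
    _ = Real.exp (ε₁ + ε₂) * ∑' m', f (Γ m') (Γ m) * μ' (Γ m') := tsum_mul_left
    _ ≤ Real.exp (ε₁ + ε₂) * ∑' m', f m' (Γ m) * μ' m' := by
        exact mul_le_mul_of_nonneg_left step2 (Real.exp_pos _).le
end

section
/- The Sparse Vector alignment constraint is valid with α=1, β=2, γ=0: for all reals q, dq, η, T̃ with −1 ≤ dq ≤ 1, it holds that q + η ≥ T̃ if and only if q + dq + η + (if q + η ≥ T̃ then 2 else 0) ≥ T̃ + 1. -/
/-- The Sparse Vector alignment constraint holds with α=1, β=2, γ=0. -/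
theorem sparse_vector_alignment_120 :
    ∀ q dq η T : ℝ, -1 ≤ dq → dq ≤ 1 →
      (q + η ≥ T ↔ q + dq + η + (if q + η ≥ T then (2 : ℝ) else 0) ≥ T + 1) := by
  intro q dq η T h1 h2
  split <;> constructor <;> intro h <;> linarith
end
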